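/- Let n ≥ 1 and let D be the matrix with rows indexed by functions f : Fin (n+1) → Fin 2 and columns indexed by functions g : Fin n → Fin 2, with D_{f,g} = 1 if f(i) = g(i) for all i ∈ Fin n (viewing Fin n included in Fin (n+1)) and f(n) = g(n−1), and 0 otherwise (D duplicates the last tensor factor, i.e. branches at the last leaf). Then for every A ⊆ Fin n and x ∈ {α, β}: D·𝔏_x^A = 𝔏_x^(A′)·D, where A′ ⊆ Fin (n+1) is A ∪ {n} if n−1 ∈ A and is A otherwise (A included into Fin (n+1)). -/
import Mathlib


open Matrix


/-- The Markov generator `L_α = [[-1, 0], [1, 0]]`. -/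
noncomputable def Lalpha : Matrix (Fin 2) (Fin 2) ℝ := !![-1, 0; 1, 0]

/-- The Markov generator `L_β = [[0, 1], [0, -1]]`. -/
noncomputable def Lbeta : Matrix (Fin 2) (Fin 2) ℝ := !![0, 1; 0, -1]

/-- `X^(A)`: the operator on the `n`-fold tensor power `(ℝ²)^⊗n` (indexed by functions
`Fin n → Fin 2`) acting as `X` on the tensor factors in `A` and as the identity elsewhere:
`(X^(A))_{f,g} = (∏_{i ∈ A} X_{f(i),g(i)}) · (∏_{j ∉ A} [f(j) = g(j)])`. -/
noncomputable def opOn {n : ℕ} (X : Matrix (Fin 2) (Fin 2) ℝ) (A : Finset (Fin n)) :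
    Matrix (Fin n → Fin 2) (Fin n → Fin 2) ℝ :=
  fun f g => (∏ i ∈ A, X (f i) (g i)) * ∏ j ∈ Aᶜ, (if f j = g j then (1 : ℝ) else 0)

/-- `𝔏_X^A := ∑_{∅ ≠ B ⊆ A} X^(B)`. -/
noncomputable def frakLA {n : ℕ} (X : Matrix (Fin 2) (Fin 2) ℝ) (A : Finset (Fin n)) :
    Matrix (Fin n → Fin 2) (Fin n → Fin 2) ℝ :=
  ∑ B ∈ A.powerset.filter (fun B => B.Nonempty), opOn X B

/-- The branching operator `D` that duplicates the last tensor factor: for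
`f : Fin (m+2) → Fin 2` and `g : Fin (m+1) → Fin 2`, `D_{f,g} = 1` iff `f` agrees with `g`
on the first `m+1` coordinates and `f` at the new last coordinate equals `g` at its last
coordinate. -/
noncomputable def dupLast (m : ℕ) : Matrix (Fin (m + 2) → Fin 2) (Fin (m + 1) → Fin 2) ℝ :=
  fun f g =>
    if (∀ i : Fin (m + 1), f i.castSucc = g i) ∧ f (Fin.last (m + 1)) = g (Fin.last m)
    then 1 else 0

lemma opOn_empty {n : ℕ} (X : Matrix (Fin 2) (Fin 2) ℝ) : opOn (n := n) X ∅ = 1 := by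
  funext f g
  simp only [opOn, Finset.prod_empty, one_mul, Finset.compl_empty]
  by_cases h : f = g
  · subst h; simp [Matrix.one_apply]
  · rw [Matrix.one_apply_ne h]
    obtain ⟨j, hj⟩ := Function.ne_iff.mp h
    exact Finset.prod_eq_zero (Finset.mem_univ j) (by simp [hj])

lemma sum_powerset_opOn {n : ℕ} (X : Matrix (Fin 2) (Fin 2) ℝ) (A : Finset (Fin n)) :
    ∑ B ∈ A.powerset, opOn X B = opOn (X + 1) A := by
  funext f g
  rw [Matrix.sum_apply]
  simp only [opOn, Matrix.add_apply, Matrix.one_apply]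
  rw [Finset.prod_add, Finset.sum_mul]
  refine Finset.sum_congr rfl fun B hB => ?_
  rw [Finset.mem_powerset] at hB
  rw [mul_assoc]
  congr 1
  rw [← Finset.prod_union (Finset.disjoint_left.mpr
    (fun j hj hj' => (Finset.mem_compl.mp hj') (Finset.mem_sdiff.mp hj).1))]
  apply Finset.prod_congr _ (fun _ _ => rfl)
  ext j
  simp only [Finset.mem_compl, Finset.mem_union, Finset.mem_sdiff]
  constructor
  · intro hj
    by_cases hA : j ∈ A
    · exact Or.inl ⟨hA, hj⟩
    · exact Or.inr hA
  · rintro (⟨_, hj⟩ | hj) hB'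
    · exact hj hB'
    · exact hj (hB hB')

lemma frakLA_eq {n : ℕ} (X : Matrix (Fin 2) (Fin 2) ℝ) (A : Finset (Fin n)) :
    frakLA X A = opOn (X + 1) A - 1 := by
  have h : A.powerset.filter (fun B => B.Nonempty) = A.powerset.erase ∅ := by
    ext B
    simp [Finset.mem_erase, Finset.nonempty_iff_ne_empty, and_comm]
  rw [frakLA, h, Finset.sum_erase_eq_sub (by simp), sum_powerset_opOn, opOn_empty]

lemma dupLast_mul_apply {m : ℕ}
    (M : Matrix (Fin (m + 1) → Fin 2) (Fin (m + 1) → Fin 2) ℝ)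
    (f : Fin (m + 2) → Fin 2) (g : Fin (m + 1) → Fin 2) :
    (dupLast m * M) f g =
      (if f (Fin.last (m + 1)) = f ((Fin.last m).castSucc) then (1 : ℝ) else 0) *
        M (fun i => f i.castSucc) g := by
  rw [Matrix.mul_apply, Finset.sum_eq_single (fun i => f i.castSucc)]
  · simp [dupLast]
  · intro b _ hb
    have : ¬ (∀ i : Fin (m + 1), f i.castSucc = b i) := by
      intro h
      exact hb (funext fun i => (h i).symm)
    simp [dupLast, this]
  · intro h; exact absurd (Finset.mem_univ _) h

lemma mul_dupLast_apply {m : ℕ}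
    (M : Matrix (Fin (m + 2) → Fin 2) (Fin (m + 2) → Fin 2) ℝ)
    (f : Fin (m + 2) → Fin 2) (g : Fin (m + 1) → Fin 2) :
    (M * dupLast m) f g = M f (Fin.snoc g (g (Fin.last m))) := by
  rw [Matrix.mul_apply, Finset.sum_eq_single (Fin.snoc g (g (Fin.last m)))]
  · simp [dupLast]
  · intro b _ hb
    have : ¬ ((∀ i : Fin (m + 1), b i.castSucc = g i) ∧
        b (Fin.last (m + 1)) = g (Fin.last m)) := by
      rintro ⟨h1, h2⟩
      apply hb
      funext j
      induction j using Fin.lastCases with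
      | last => simpa using h2
      | cast i => simpa using h1 i
    simp [dupLast, this]
  · intro h; exact absurd (Finset.mem_univ _) h

lemma compl_image {m : ℕ} (A : Finset (Fin (m + 1))) :
    (A.image Fin.castSucc)ᶜ = insert (Fin.last (m + 1)) (Aᶜ.image Fin.castSucc) := by
  ext j
  induction j using Fin.lastCases with
  | last => simp [(Fin.castSucc_lt_last _).ne]
  | cast i => simp [Fin.castSucc_injective, (Fin.castSucc_lt_last i).ne]

lemma compl_insert_last {m : ℕ} (A : Finset (Fin (m + 1))) :
    (insert (Fin.last (m + 1)) (A.image Fin.castSucc))ᶜ = Aᶜ.image Fin.castSucc := by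
  rw [Finset.compl_insert, compl_image,
    Finset.erase_insert (by simp [(Fin.castSucc_lt_last _).ne])]

lemma delta_mul_delta (a b c : Fin 2) :
    (if a = b then (1 : ℝ) else 0) * (if b = c then (1 : ℝ) else 0) =
      (if a = c then (1 : ℝ) else 0) * (if b = c then (1 : ℝ) else 0) := by
  by_cases h1 : b = c
  · subst h1; simp
  · simp [h1]

lemma key {m : ℕ} (Y : Matrix (Fin 2) (Fin 2) ℝ) (y : Fin 2 → ℝ)
    (hY : ∀ a b, Y a b = y a)
    (hy : ∀ a b : Fin 2, (if a = b then (1 : ℝ) else 0) * y b = y a * y b)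
    (A : Finset (Fin (m + 1))) :
    dupLast m * opOn Y A =
      opOn Y (if Fin.last m ∈ A then insert (Fin.last (m + 1)) (A.image Fin.castSucc)
        else A.image Fin.castSucc) * dupLast m := by
  funext f g
  rw [dupLast_mul_apply, mul_dupLast_apply]
  have hlast : Fin.last (m + 1) ∉ A.image Fin.castSucc := by
    simp [(Fin.castSucc_lt_last _).ne]
  have hlast' : Fin.last (m + 1) ∉ Aᶜ.image Fin.castSucc := by
    simp [(Fin.castSucc_lt_last _).ne]
  have hinj : ∀ (B : Finset (Fin (m + 1))), Set.InjOn Fin.castSucc B :=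
    fun B => (Fin.castSucc_injective (m + 1)).injOn
  by_cases hA : Fin.last m ∈ A
  · simp only [if_pos hA, opOn]
    simp only [hY]
    rw [Finset.prod_insert hlast, Finset.prod_image (hinj A),
      compl_insert_last, Finset.prod_image (hinj Aᶜ)]
    simp only [Fin.snoc_castSucc]
    rw [← Finset.mul_prod_erase A (fun i => y (f i.castSucc)) hA]
    have h2 := hy (f (Fin.last (m + 1))) (f ((Fin.last m).castSucc))
    linear_combination ((∏ i ∈ A.erase (Fin.last m), y (f i.castSucc)) *
      ∏ j ∈ Aᶜ, (if f j.castSucc = g j then (1 : ℝ) else 0)) * h2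
  · simp only [if_neg hA, opOn]
    simp only [hY]
    rw [Finset.prod_image (hinj A), compl_image, Finset.prod_insert hlast',
      Finset.prod_image (hinj Aᶜ)]
    simp only [Fin.snoc_castSucc, Fin.snoc_last]
    have hAc : Fin.last m ∈ Aᶜ := Finset.mem_compl.mpr hA
    rw [← Finset.mul_prod_erase Aᶜ
      (fun j => if f j.castSucc = g j then (1 : ℝ) else 0) hAc]
    have h3 := delta_mul_delta (f (Fin.last (m + 1))) (f ((Fin.last m).castSucc)) (g (Fin.last m))
    linear_combination ((∏ i ∈ A, y (f i.castSucc)) *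
      ∏ j ∈ Aᶜ.erase (Fin.last m), (if f j.castSucc = g j then (1 : ℝ) else 0)) * h3

lemma key_alpha : ∀ a b, (Lalpha + 1) a b = ![(0 : ℝ), 1] a := by
  intro a b
  fin_cases a <;> fin_cases b <;>
    simp [Lalpha, Matrix.one_apply] <;> norm_num

lemma key_beta : ∀ a b, (Lbeta + 1) a b = ![(1 : ℝ), 0] a := by
  intro a b
  fin_cases a <;> fin_cases b <;>
    simp [Lbeta, Matrix.one_apply] <;> norm_num

lemma hy_alpha : ∀ a b : Fin 2,
    (if a = b then (1 : ℝ) else 0) * (![(0 : ℝ), 1]) b = (![(0 : ℝ), 1]) a * (![(0 : ℝ), 1]) b := by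
  intro a b; fin_cases a <;> fin_cases b <;> norm_num

lemma hy_beta : ∀ a b : Fin 2,
    (if a = b then (1 : ℝ) else 0) * (![(1 : ℝ), 0]) b = (![(1 : ℝ), 0]) a * (![(1 : ℝ), 0]) b := by
  intro a b; fin_cases a <;> fin_cases b <;> norm_num

/-- For `n = m + 1 ≥ 1`, every `A ⊆ Fin n` and `x ∈ {α, β}`: `D·𝔏_x^A = 𝔏_x^(A′)·D`,
where `A′ ⊆ Fin (n+1)` is `A ∪ {n}` if the last leaf `n−1` lies in `A`, and `A`
otherwise (with `A` included into `Fin (n+1)` via `Fin.castSucc`). -/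
theorem dupLast_intertwine (m : ℕ) (A : Finset (Fin (m + 1))) :
    dupLast m * frakLA Lalpha A =
      frakLA Lalpha
        (if Fin.last m ∈ A then insert (Fin.last (m + 1)) (A.image Fin.castSucc)
         else A.image Fin.castSucc) * dupLast m ∧
    dupLast m * frakLA Lbeta A =
      frakLA Lbeta
        (if Fin.last m ∈ A then insert (Fin.last (m + 1)) (A.image Fin.castSucc)
         else A.image Fin.castSucc) * dupLast m := by
  constructor
  · rw [frakLA_eq, frakLA_eq, Matrix.mul_sub, Matrix.sub_mul, Matrix.mul_one, Matrix.one_mul,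
      key (Lalpha + 1) ![(0 : ℝ), 1] key_alpha hy_alpha A]
  · rw [frakLA_eq, frakLA_eq, Matrix.mul_sub, Matrix.sub_mul, Matrix.mul_one, Matrix.one_mul,
      key (Lbeta + 1) ![(1 : ℝ), 0] key_beta hy_beta A]
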